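/- With Γ and e defined by e_λ = sign((K*(y-u))_λ) for λ ∈ Γ and e_λ = 0 otherwise, every minimizer x̃ of ‖Kx-y‖² on B_R satisfies ⟨x̃, e⟩ = R, provided the minimizers are not global minimizers of ‖Kx-y‖². -/

import Mathlib

open scoped ENNReal NNReal

/-- The `ℓ¹`-ball of radius `R` inside `ℓ²(I)`. -/
noncomputable def l1Ball (I : Type*) (R : ℝ) : Set (lp (fun _ : I => ℝ) 2) :=
  {x | (∑' i, (‖x i‖₊ : ℝ≥0∞)) ≤ ENNReal.ofReal R}

section Aux

open RealInnerProductSpace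

variable {I : Type*}

private lemma stmt13_mem_l1Ball_iff {R : ℝ} (hR : 0 ≤ R) (x : lp (fun _ : I => ℝ) 2) :
    x ∈ l1Ball I R ↔ Summable (fun i => ‖x i‖) ∧ ∑' i, ‖x i‖ ≤ R := by
  constructor
  · intro h
    have hne : (∑' i, (‖x i‖₊ : ℝ≥0∞)) ≠ ⊤ := (h.trans_lt ENNReal.ofReal_lt_top).ne
    have hs : Summable fun i => ‖x i‖₊ := ENNReal.tsum_coe_ne_top_iff_summable.mp hne
    have hs' : Summable fun i => ‖x i‖ := by
      simpa [← NNReal.summable_coe] using hs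
    refine ⟨hs', ?_⟩
    rw [l1Ball, Set.mem_setOf_eq, ← ENNReal.coe_tsum hs, ENNReal.ofReal, ENNReal.coe_le_coe] at h
    calc ∑' i, ‖x i‖ = ((∑' i, ‖x i‖₊ : ℝ≥0) : ℝ) := by
          rw [NNReal.coe_tsum]; simp
      _ ≤ R.toNNReal := h
      _ = R := Real.coe_toNNReal R hR
  · rintro ⟨hs', hle⟩
    have hs : Summable fun i => ‖x i‖₊ := by
      simpa [← NNReal.summable_coe] using hs'
    rw [l1Ball, Set.mem_setOf_eq, ← ENNReal.coe_tsum hs, ENNReal.ofReal, ENNReal.coe_le_coe,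
      ← NNReal.coe_le_coe]
    calc ((∑' i, ‖x i‖₊ : ℝ≥0) : ℝ) = ∑' i, ‖x i‖ := by rw [NNReal.coe_tsum]; simp
      _ ≤ R := hle
      _ = (R.toNNReal : ℝ) := (Real.coe_toNNReal R hR).symm

private lemma stmt13_l1Ball_convex {R : ℝ} (hR : 0 ≤ R) {x w : lp (fun _ : I => ℝ) 2}
    (hx : x ∈ l1Ball I R) (hw : w ∈ l1Ball I R) {t : ℝ} (ht0 : 0 ≤ t) (ht1 : t ≤ 1) :
    (1 - t) • x + t • w ∈ l1Ball I R := by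
  obtain ⟨hxs, hxl⟩ := (stmt13_mem_l1Ball_iff hR x).mp hx
  obtain ⟨hws, hwl⟩ := (stmt13_mem_l1Ball_iff hR w).mp hw
  rw [stmt13_mem_l1Ball_iff hR]
  have hcoe : ∀ i, ((1 - t) • x + t • w : lp (fun _ : I => ℝ) 2) i
      = (1 - t) * x i + t * w i := by
    intro i; simp [lp.coeFn_add, lp.coeFn_smul]; rfl
  have hbndS : Summable (fun i => (1 - t) * ‖x i‖ + t * ‖w i‖) :=
    (hxs.mul_left _).add (hws.mul_left _)
  have hptle : ∀ i, ‖((1 - t) • x + t • w : lp (fun _ : I => ℝ) 2) i‖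
      ≤ (1 - t) * ‖x i‖ + t * ‖w i‖ := by
    intro i
    rw [hcoe i]
    calc ‖(1 - t) * x i + t * w i‖ ≤ ‖(1 - t) * x i‖ + ‖t * w i‖ := norm_add_le _ _
      _ = (1 - t) * ‖x i‖ + t * ‖w i‖ := by
          rw [norm_mul, norm_mul, Real.norm_of_nonneg (by linarith), Real.norm_of_nonneg ht0]
  have hS : Summable (fun i => ‖((1 - t) • x + t • w : lp (fun _ : I => ℝ) 2) i‖) :=
    Summable.of_nonneg_of_le (fun i => norm_nonneg _) hptle hbndS
  refine ⟨hS, ?_⟩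
  calc ∑' i, ‖((1 - t) • x + t • w : lp (fun _ : I => ℝ) 2) i‖
      ≤ ∑' i, ((1 - t) * ‖x i‖ + t * ‖w i‖) := Summable.tsum_le_tsum hptle hS hbndS
    _ = (1 - t) * ∑' i, ‖x i‖ + t * ∑' i, ‖w i‖ := by
        rw [Summable.tsum_add (hxs.mul_left _) (hws.mul_left _), tsum_mul_left, tsum_mul_left]
    _ ≤ (1 - t) * R + t * R := by
        have h1 : 0 ≤ 1 - t := by linarith
        gcongr
    _ = R := by ring

private lemma stmt13_single_mem_l1Ball [DecidableEq I] {R : ℝ} (hR : 0 ≤ R) (i : I) {c : ℝ}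
    (hc : |c| ≤ R) : lp.single 2 i c ∈ l1Ball I R := by
  rw [l1Ball, Set.mem_setOf_eq]
  have : ∑' j, (‖(lp.single (E := fun _ : I => ℝ) 2 i c) j‖₊ : ℝ≥0∞) = (‖c‖₊ : ℝ≥0∞) := by
    refine (tsum_eq_single i (fun j hj => ?_)).trans ?_
    · rw [lp.single_apply_ne (E := fun _ : I => ℝ) 2 i c hj]; simp
    · rw [lp.single_apply_self (E := fun _ : I => ℝ)]
  rw [this, ← enorm_eq_nnnorm, ← ofReal_norm]
  exact ENNReal.ofReal_le_ofReal (by rwa [Real.norm_eq_abs])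

private lemma stmt13_tsum_eq_of_le {f h : I → ℝ} (hf : Summable f) (hh : Summable h)
    (hle : ∀ i, f i ≤ h i) (heq : ∑' i, f i = ∑' i, h i) : ∀ i, f i = h i := by
  intro i
  have hsub : Summable (fun j => h j - f j) := hh.sub hf
  have hz : ∑' j, (h j - f j) = 0 := by rw [Summable.tsum_sub hh hf, heq, sub_self]
  have h2 : h i - f i ≤ ∑' j, (h j - f j) :=
    Summable.le_tsum hsub i (fun j _ => sub_nonneg.mpr (hle j))
  have h3 := sub_nonneg.mpr (hle i)
  rw [hz] at h2
  linarith

private lemma stmt13_sign_abs_le (x : ℝ) : |Real.sign x| ≤ 1 := by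
  rcases Real.sign_apply_eq x with h | h | h <;> rw [h] <;> norm_num

private lemma stmt13_mul_sign_eq_abs (x : ℝ) : x * Real.sign x = |x| := by
  rcases lt_trichotomy x 0 with h | h | h
  · rw [Real.sign_of_neg h, abs_of_neg h]; ring
  · simp [h]
  · rw [Real.sign_of_pos h, abs_of_pos h]; ring

end Aux

/-- With `e i = sign((K*(y-u)) i)` for `i ∈ Γ = {i : |(K*(y-u)) i| = ‖K*(y-u)‖_∞}` and
`e i = 0` otherwise, every minimizer `xt` of `‖Kx-y‖²` on `B_R` satisfies `⟨xt, e⟩ = R`,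
provided the minimizers are not global minimizers (`K*(y-u) ≠ 0`). -/
theorem stmt13 {I : Type*} [Countable I] {H : Type*} [NormedAddCommGroup H]
    [InnerProductSpace ℝ H] [CompleteSpace H]
    (K : lp (fun _ : I => ℝ) 2 →L[ℝ] H) (y : H) (R : ℝ) (hR : 0 < R)
    (u : H)
    (hu : ∀ xt ∈ l1Ball I R,
      (∀ w ∈ l1Ball I R, ‖K xt - y‖ ^ 2 ≤ ‖K w - y‖ ^ 2) → K xt = u)
    (hex : ∃ xt ∈ l1Ball I R, ∀ w ∈ l1Ball I R, ‖K xt - y‖ ^ 2 ≤ ‖K w - y‖ ^ 2)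
    (hne : (ContinuousLinearMap.adjoint K) (y - u) ≠ 0)
    (e : I → ℝ)
    (he : ∀ i : I, e i =
      if |(ContinuousLinearMap.adjoint K) (y - u) i| =
          (⨆ j : I, |(ContinuousLinearMap.adjoint K) (y - u) j|) then
        Real.sign ((ContinuousLinearMap.adjoint K) (y - u) i)
      else 0) :
    ∀ xt ∈ l1Ball I R,
      (∀ w ∈ l1Ball I R, ‖K xt - y‖ ^ 2 ≤ ‖K w - y‖ ^ 2) →
      ∑' i : I, xt i * e i = R := by
  classical
  open RealInnerProductSpace in
  intro xt hmem hmin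
  set g := (ContinuousLinearMap.adjoint K) (y - u) with hgdef
  set M := ⨆ j : I, |g j| with hMdef
  have hKxt : K xt = u := hu xt hmem hmin
  -- variational inequality
  have hvar : ∀ w ∈ l1Ball I R, (0:ℝ) ≤ ⟪u - y, K w - u⟫ := by
    intro w hw
    set a := u - y with hadef
    set b := K w - u with hbdef
    have hq : ∀ t : ℝ, 0 < t → t ≤ 1 → 0 ≤ 2 * (t * ⟪a, b⟫) + t ^ 2 * ‖b‖ ^ 2 := by
      intro t ht0 ht1
      have hz : (1 - t) • xt + t • w ∈ l1Ball I R :=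
        stmt13_l1Ball_convex hR.le hmem hw ht0.le ht1
      have hmin' := hmin _ hz
      have hKz : K ((1 - t) • xt + t • w) - y = a + t • b := by
        rw [map_add, map_smul, map_smul, hKxt, hadef, hbdef]
        module
      rw [hKz, hKxt, norm_add_sq_real, real_inner_smul_right, norm_smul,
        Real.norm_eq_abs, mul_pow, sq_abs] at hmin'
      have : ‖a‖ ^ 2 = ‖u - y‖ ^ 2 := by rw [hadef]
      nlinarith [hmin']
    by_contra hc
    push_neg at hc
    set c := -⟪a, b⟫ with hcdef
    have hcpos : 0 < c := by simp [hcdef]; linarith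
    have hb : b ≠ 0 := by
      intro h0
      rw [h0, inner_zero_right] at hc
      exact lt_irrefl 0 hc
    have hbn : (0:ℝ) < ‖b‖ := norm_pos_iff.mpr hb
    have hb2 : (0:ℝ) < ‖b‖ ^ 2 := by positivity
    set t := min 1 (c / ‖b‖ ^ 2) with htdef
    have ht0 : 0 < t := lt_min one_pos (div_pos hcpos hb2)
    have ht1 : t ≤ 1 := min_le_left _ _
    have h5 : t * ‖b‖ ^ 2 ≤ c := by
      rw [← le_div_iff₀ hb2]; exact min_le_right _ _
    have := hq t ht0 ht1
    nlinarith [mul_pos ht0 hcpos]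
  -- consequence: ⟪g, w⟫ ≤ ⟪g, xt⟫ for all w in the ball
  set S : ℝ := ⟪g, xt⟫ with hSdef
  have hopt : ∀ w ∈ l1Ball I R, ⟪g, w⟫ ≤ S := by
    intro w hw
    have h1 : ⟪g, w⟫ = ⟪y - u, K w⟫ := ContinuousLinearMap.adjoint_inner_left K w (y - u)
    have h2 : S = ⟪y - u, K xt⟫ := ContinuousLinearMap.adjoint_inner_left K xt (y - u)
    have h3 := hvar w hw
    have h4 : ⟪y - u, K w⟫ - ⟪y - u, K xt⟫ = -⟪u - y, K w - u⟫ := by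
      rw [← inner_sub_right, hKxt, ← neg_sub u y, inner_neg_left]
    rw [h1, h2]
    linarith [h3, h4]
  -- basic facts about g and M
  have hnz : ∃ i, g i ≠ 0 := by
    by_contra h
    push_neg at h
    exact hne (lp.ext (funext fun i => by simp [h i]))
  obtain ⟨i0, hi0⟩ := hnz
  haveI : Nonempty I := ⟨i0⟩
  have hBdd : BddAbove (Set.range fun j : I => |g j|) := by
    refine ⟨‖g‖, ?_⟩
    rintro _ ⟨j, rfl⟩
    simpa [Real.norm_eq_abs] using lp.norm_apply_le_norm (by norm_num : (2:ℝ≥0∞) ≠ 0) g j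
  have hleM : ∀ i, |g i| ≤ M := fun i => le_ciSup hBdd i
  have hM0 : 0 < M := lt_of_lt_of_le (abs_pos.mpr hi0) (hleM i0)
  -- lower bound: R * M ≤ S
  have hlow : ∀ i, R * |g i| ≤ S := by
    intro i
    have hc : |R * Real.sign (g i)| ≤ R := by
      rw [abs_mul, abs_of_pos hR]
      calc R * |Real.sign (g i)| ≤ R * 1 :=
            mul_le_mul_of_nonneg_left (stmt13_sign_abs_le _) hR.le
        _ = R := mul_one R
    have hwmem := stmt13_single_mem_l1Ball (I := I) hR.le i hc
    have hval : ⟪g, lp.single 2 i (R * Real.sign (g i))⟫ = R * |g i| := by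
      rw [lp.inner_single_right]
      simp only [RCLike.inner_apply, starRingEnd_apply, star_trivial]
      rw [show R * Real.sign (g i) * g i = R * (g i * Real.sign (g i)) by ring,
        stmt13_mul_sign_eq_abs]
    calc R * |g i| = ⟪g, lp.single 2 i (R * Real.sign (g i))⟫ := hval.symm
      _ ≤ S := hopt _ hwmem
  have hRM : R * M ≤ S := by
    have : M ≤ S / R := ciSup_le fun i => (le_div_iff₀ hR).mpr (by linarith [hlow i])
    calc R * M ≤ R * (S / R) := mul_le_mul_of_nonneg_left this hR.le
      _ = S := by field_simp
  -- summability facts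
  obtain ⟨hxs, hxl⟩ := (stmt13_mem_l1Ball_iff hR.le xt).mp hmem
  have habs : Summable (fun i => |xt i|) := by simpa [Real.norm_eq_abs] using hxs
  have hNR : ∑' i, |xt i| ≤ R := by simpa [Real.norm_eq_abs] using hxl
  set N : ℝ := ∑' i, |xt i| with hNdef
  have habsM : Summable (fun i => |xt i| * M) := habs.mul_right M
  have hprod_abs : Summable (fun i => |xt i| * |g i|) :=
    Summable.of_nonneg_of_le (fun i => mul_nonneg (abs_nonneg _) (abs_nonneg _))
      (fun i => mul_le_mul_of_nonneg_left (hleM i) (abs_nonneg _)) habsM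
  have hprod : Summable (fun i => xt i * g i) := by
    refine Summable.of_abs ?_
    simpa [abs_mul] using hprod_abs
  have hST : S = ∑' i, xt i * g i := by
    rw [hSdef, lp.inner_eq_tsum]
    simp only [RCLike.inner_apply, starRingEnd_apply, star_trivial]
  -- the chain of inequalities
  have h2 : ∑' i, xt i * g i ≤ ∑' i, |xt i| * |g i| :=
    Summable.tsum_le_tsum (fun i => (le_abs_self _).trans_eq (abs_mul _ _)) hprod hprod_abs
  have h3 : ∑' i, |xt i| * |g i| ≤ ∑' i, |xt i| * M :=
    Summable.tsum_le_tsum (fun i => mul_le_mul_of_nonneg_left (hleM i) (abs_nonneg _))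
      hprod_abs habsM
  have htM : ∑' i, |xt i| * M = N * M := tsum_mul_right
  have h4 : N * M ≤ R * M := mul_le_mul_of_nonneg_right hNR hM0.le
  have hRMS : R * M = S := le_antisymm hRM (by rw [hST]; linarith [htM ▸ h3])
  -- all equalities
  have heqT : ∑' i, xt i * g i = ∑' i, |xt i| * |g i| := by
    refine le_antisymm h2 ?_
    rw [← hST, ← hRMS]
    linarith [htM ▸ h3]
  have heqT2 : ∑' i, |xt i| * |g i| = ∑' i, |xt i| * M := by
    refine le_antisymm h3 ?_
    rw [htM, ← heqT, ← hST, ← hRMS]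
    linarith
  have hNeqR : N = R := by
    have hNM : N * M = R * M := by
      refine le_antisymm h4 ?_
      rw [hRMS, hST, heqT, heqT2, htM]
    exact mul_right_cancel₀ hM0.ne' hNM
  -- termwise equalities
  have hterm1 : ∀ i, xt i * g i = |xt i| * |g i| :=
    stmt13_tsum_eq_of_le hprod hprod_abs
      (fun i => (le_abs_self _).trans_eq (abs_mul _ _)) heqT
  have hterm2 : ∀ i, |xt i| * |g i| = |xt i| * M :=
    stmt13_tsum_eq_of_le hprod_abs habsM
      (fun i => mul_le_mul_of_nonneg_left (hleM i) (abs_nonneg _)) heqT2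
  -- conclude
  have hfinal : ∀ i, xt i * e i = |xt i| := by
    intro i
    rcases eq_or_ne (xt i) 0 with h | h
    · rw [h, zero_mul, abs_zero]
    · have habs0 : |xt i| ≠ 0 := abs_ne_zero.mpr h
      have hgi : |g i| = M := mul_left_cancel₀ habs0 (hterm2 i)
      have hgne : g i ≠ 0 := by
        intro h0
        rw [h0, abs_zero] at hgi
        exact hM0.ne' hgi.symm
      have hei : e i = Real.sign (g i) := by rw [he i, if_pos hgi]
      have h1 := hterm1 i
      rcases hgne.lt_or_gt with hlt | hlt
      · rw [abs_of_neg hlt] at h1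
        have hxti : xt i = -|xt i| :=
          mul_right_cancel₀ hlt.ne (by linarith [h1] : xt i * g i = (-|xt i|) * g i)
        rw [hei, Real.sign_of_neg hlt]
        linarith [hxti]
      · rw [abs_of_pos hlt] at h1
        have hxti : xt i = |xt i| := mul_right_cancel₀ hlt.ne' h1
        rw [hei, Real.sign_of_pos hlt]
        linarith [hxti]
  calc ∑' i, xt i * e i = ∑' i, |xt i| := tsum_congr hfinal
    _ = R := hNeqR
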